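/- Let H₀ and H₁ be complex Hilbert spaces, let T₀ be a bounded operator on H₀ and T₁ a bounded operator on H₁, and let X : H₁ → H₀ be a bounded linear operator. Define the bounded operator T on H₀ ⊕ H₁ in block form by T(x, y) = (T₀x + (XT₁ − T₀X)y, T₁y). If T₀ and T₁ are weakly homogeneous, then T is weakly homogeneous. -/

import Mathlib

noncomputable section

open Complex Metric
/-- The block operator `(x, y) ↦ (T₀ x + (X T₁ − T₀ X) y, T₁ y)` on the Hilbert space
direct sum `H₀ ⊕ H₁`. -/
def blockT2 {H0 H1 : Type*} [NormedAddCommGroup H0] [NormedSpace ℂ H0]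
    [NormedAddCommGroup H1] [NormedSpace ℂ H1]
    (T0 : H0 →L[ℂ] H0) (T1 : H1 →L[ℂ] H1) (X : H1 →L[ℂ] H0) :
    WithLp 2 (H0 × H1) →L[ℂ] WithLp 2 (H0 × H1) :=
  let E := WithLp.prodContinuousLinearEquiv 2 ℂ H0 H1
  (E.symm.toContinuousLinearMap).comp
    ((((T0.comp (ContinuousLinearMap.fst ℂ H0 H1)) +
        ((X.comp T1 - T0.comp X).comp (ContinuousLinearMap.snd ℂ H0 H1))).prod
      (T1.comp (ContinuousLinearMap.snd ℂ H0 H1))).comp E.toContinuousLinearMap)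
/-- The action of the Möbius map `z ↦ e^{iθ}(z − a)/(1 − conj(a) z)` on an operator:
`φ(A) = e^{iθ}(A − a)(I − conj(a)A)⁻¹`. -/
def mobiusOp {E : Type*} [NormedAddCommGroup E] [NormedSpace ℂ E]
    (θ : ℝ) (a : ℂ) (A : E →L[ℂ] E) : E →L[ℂ] E :=
  Complex.exp (θ * Complex.I) •
    ((A - a • (1 : E →L[ℂ] E)) * Ring.inverse (1 - (starRingEnd ℂ) a • A))

/-- Two bounded operators are similar if they are intertwined by a bounded
invertible operator. -/
def SimilarOp {E : Type*} [NormedAddCommGroup E] [NormedSpace ℂ E]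
    (A B : E →L[ℂ] E) : Prop :=
  ∃ S : (E →L[ℂ] E)ˣ, (S : E →L[ℂ] E) * A = B * (S : E →L[ℂ] E)

/-- A bounded operator is weakly homogeneous if its spectrum is contained in the closed
unit disc and `φ(A)` is similar to `A` for every Möbius map `φ`. -/
def WeaklyHomogeneousOp {E : Type*} [NormedAddCommGroup E] [NormedSpace ℂ E]
    (A : E →L[ℂ] E) : Prop :=
  spectrum ℂ A ⊆ closedBall (0 : ℂ) 1 ∧
    ∀ (θ : ℝ) (a : ℂ), ‖a‖ < 1 → SimilarOp (mobiusOp θ a A) A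
namespace WHaux

/-- `Ring.inverse` commutes with ring equivalences. -/
lemma map_ringInverse {A B : Type*} [Semiring A] [Semiring B] (f : A ≃+* B) (x : A) :
    f (Ring.inverse x) = Ring.inverse (f x) := by
  by_cases h : IsUnit x
  · obtain ⟨u, rfl⟩ := h
    have h1 : (f ↑u : B) = ↑(Units.map (f : A →* B) u) := rfl
    rw [Ring.inverse_unit, h1, Ring.inverse_unit]
    rfl
  · rw [Ring.inverse_non_unit _ h, Ring.inverse_non_unit, map_zero]
    intro hf
    exact h (by simpa using hf.map (f.symm : B →+* A))

/-- `Ring.inverse` of a conjugate. -/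
lemma ringInverse_conj {A : Type*} [Ring A] (u : Aˣ) (b : A) :
    Ring.inverse (↑u * b * ↑u⁻¹) = ↑u * Ring.inverse b * ↑u⁻¹ := by
  by_cases h : IsUnit b
  · obtain ⟨v, rfl⟩ := h
    have h1 : (↑u * ↑v * ↑u⁻¹ : A) = ↑(u * v * u⁻¹) := rfl
    rw [h1, Ring.inverse_unit, Ring.inverse_unit]
    simp [mul_assoc]
  · rw [Ring.inverse_non_unit _ h, Ring.inverse_non_unit, mul_zero, zero_mul]
    intro hf
    apply h
    have h2 := (u⁻¹.isUnit.mul hf).mul u.isUnit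
    have h3 : ↑u⁻¹ * (↑u * b * ↑u⁻¹) * ↑u = b := by
      calc ↑u⁻¹ * (↑u * b * ↑u⁻¹) * ↑u = (↑u⁻¹ * ↑u) * b * (↑u⁻¹ * ↑u) := by
            simp only [mul_assoc]
        _ = b := by simp
    rwa [h3] at h2

/-- Conjugation by a continuous linear equivalence, as an algebra equivalence of
endomorphism algebras. -/
def conjAlgEquiv {E F : Type*} [NormedAddCommGroup E] [NormedSpace ℂ E]
    [NormedAddCommGroup F] [NormedSpace ℂ F] (e : E ≃L[ℂ] F) :
    (E →L[ℂ] E) ≃ₐ[ℂ] (F →L[ℂ] F) where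
  toFun A := (e : E →L[ℂ] F).comp (A.comp (e.symm : F →L[ℂ] E))
  invFun B := (e.symm : F →L[ℂ] E).comp (B.comp (e : E →L[ℂ] F))
  left_inv A := by ext x; simp
  right_inv B := by ext x; simp
  map_mul' A B := by ext x; simp [ContinuousLinearMap.mul_apply]
  map_add' A B := by ext x; simp
  commutes' c := by
    ext x
    simp [Algebra.algebraMap_eq_smul_one]

lemma mobiusOp_map {E F : Type*} [NormedAddCommGroup E] [NormedSpace ℂ E]
    [NormedAddCommGroup F] [NormedSpace ℂ F]
    (f : (E →L[ℂ] E) ≃ₐ[ℂ] (F →L[ℂ] F)) (θ : ℝ) (a : ℂ) (A : E →L[ℂ] E) :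
    f (mobiusOp θ a A) = mobiusOp θ a (f A) := by
  have hinv : f (Ring.inverse (1 - (starRingEnd ℂ) a • A)) =
      Ring.inverse (1 - (starRingEnd ℂ) a • f A) := by
    rw [show (f (Ring.inverse (1 - (starRingEnd ℂ) a • A)) : F →L[ℂ] F)
        = f.toRingEquiv (Ring.inverse (1 - (starRingEnd ℂ) a • A)) from rfl,
      map_ringInverse]
    simp
  simp [mobiusOp, map_smul, map_mul, map_sub, map_one, hinv]

lemma weaklyHomogeneous_map {E F : Type*} [NormedAddCommGroup E] [NormedSpace ℂ E]
    [NormedAddCommGroup F] [NormedSpace ℂ F]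
    (f : (E →L[ℂ] E) ≃ₐ[ℂ] (F →L[ℂ] F)) (A : E →L[ℂ] E)
    (h : WeaklyHomogeneousOp A) : WeaklyHomogeneousOp (f A) := by
  obtain ⟨hs, hm⟩ := h
  constructor
  · rw [AlgEquiv.spectrum_eq f A]; exact hs
  · intro θ a ha
    obtain ⟨S, hS⟩ := hm θ a ha
    refine ⟨Units.map (f : (E →L[ℂ] E) →* (F →L[ℂ] F)) S, ?_⟩
    have hc : ((Units.map (f : (E →L[ℂ] E) →* (F →L[ℂ] F)) S : (F →L[ℂ] F)ˣ) : F →L[ℂ] F)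
        = f ↑S := rfl
    rw [hc, ← mobiusOp_map f, ← map_mul, hS, map_mul]

end WHaux

namespace WHaux

open ContinuousLinearMap

variable {H0 H1 : Type*} [NormedAddCommGroup H0] [NormedSpace ℂ H0]
  [NormedAddCommGroup H1] [NormedSpace ℂ H1]

lemma prodMap_mul (A A' : H0 →L[ℂ] H0) (B B' : H1 →L[ℂ] H1) :
    (A.prodMap B) * (A'.prodMap B') = (A * A').prodMap (B * B') := by
  ext x <;> simp [ContinuousLinearMap.coe_prodMap', ContinuousLinearMap.mul_apply]

lemma prodMap_one : (1 : H0 →L[ℂ] H0).prodMap (1 : H1 →L[ℂ] H1) = 1 := by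
  ext x <;> simp [ContinuousLinearMap.coe_prodMap']

lemma prodMap_sub (A A' : H0 →L[ℂ] H0) (B B' : H1 →L[ℂ] H1) :
    (A.prodMap B) - (A'.prodMap B') = (A - A').prodMap (B - B') := by
  ext x <;> simp [ContinuousLinearMap.coe_prodMap']

lemma prodMap_smul (z : ℂ) (A : H0 →L[ℂ] H0) (B : H1 →L[ℂ] H1) :
    z • (A.prodMap B) = (z • A).prodMap (z • B) := by
  ext x <;> simp [ContinuousLinearMap.coe_prodMap']

lemma prodMap_smul_one (z : ℂ) :
    (z • (1 : H0 →L[ℂ] H0)).prodMap (z • (1 : H1 →L[ℂ] H1))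
      = z • (1 : (H0 × H1) →L[ℂ] (H0 × H1)) := by
  ext x <;> simp [ContinuousLinearMap.coe_prodMap']

/-- The product of two units, as a unit of the endomorphism algebra of the product. -/
def unitsProdMap (S0 : (H0 →L[ℂ] H0)ˣ) (S1 : (H1 →L[ℂ] H1)ˣ) :
    ((H0 × H1) →L[ℂ] (H0 × H1))ˣ where
  val := (↑S0 : H0 →L[ℂ] H0).prodMap ↑S1
  inv := (↑S0⁻¹ : H0 →L[ℂ] H0).prodMap ↑S1⁻¹
  val_inv := by rw [prodMap_mul]; simp [prodMap_one]
  inv_val := by rw [prodMap_mul]; simp [prodMap_one]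

lemma isUnit_one_sub_smul {E : Type*} [NormedAddCommGroup E] [NormedSpace ℂ E]
    (T : E →L[ℂ] E) (hs : spectrum ℂ T ⊆ closedBall (0 : ℂ) 1) {c : ℂ} (hc : ‖c‖ < 1) :
    IsUnit (1 - c • T) := by
  rcases eq_or_ne c 0 with rfl | h
  · simp
  have hcpos : (0 : ℝ) < ‖c‖ := norm_pos_iff.mpr h
  have hnorm : 1 < ‖(c⁻¹ : ℂ)‖ := by
    rw [norm_inv]
    exact (one_lt_inv₀ hcpos).mpr hc
  have hmem : c⁻¹ ∉ spectrum ℂ T := by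
    intro hmem
    have := hs hmem
    rw [mem_closedBall_zero_iff] at this
    linarith
  have hu : IsUnit (algebraMap ℂ (E →L[ℂ] E) c⁻¹ - T) := spectrum.notMem_iff.mp hmem
  have h2 : 1 - c • T = algebraMap ℂ (E →L[ℂ] E) c * (algebraMap ℂ (E →L[ℂ] E) c⁻¹ - T) := by
    rw [mul_sub, ← map_mul, mul_inv_cancel₀ h, map_one, ← Algebra.smul_def]
  rw [h2]
  exact ((isUnit_iff_ne_zero.mpr h).map (algebraMap ℂ (E →L[ℂ] E))).mul hu

lemma mobiusOp_prodMap (θ : ℝ) (a : ℂ) (T0 : H0 →L[ℂ] H0) (T1 : H1 →L[ℂ] H1)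
    (hu0 : IsUnit (1 - (starRingEnd ℂ) a • T0)) (hu1 : IsUnit (1 - (starRingEnd ℂ) a • T1)) :
    mobiusOp θ a (T0.prodMap T1) = (mobiusOp θ a T0).prodMap (mobiusOp θ a T1) := by
  set c := (starRingEnd ℂ) a with hc
  obtain ⟨V0, hV0⟩ := hu0
  obtain ⟨V1, hV1⟩ := hu1
  have hone : (1 : (H0 × H1) →L[ℂ] (H0 × H1)) = (1 : H0 →L[ℂ] H0).prodMap 1 := prodMap_one.symm
  have hsub : T0.prodMap T1 - a • (1 : (H0 × H1) →L[ℂ] (H0 × H1))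
      = (T0 - a • 1).prodMap (T1 - a • 1) := by
    rw [hone, prodMap_smul, prodMap_sub]
  have hden : (1 : (H0 × H1) →L[ℂ] (H0 × H1)) - c • T0.prodMap T1
      = (1 - c • T0).prodMap (1 - c • T1) := by
    rw [hone, prodMap_smul, prodMap_sub]
  have hV : Ring.inverse ((↑V0 : H0 →L[ℂ] H0).prodMap (↑V1 : H1 →L[ℂ] H1))
      = (↑V0⁻¹ : H0 →L[ℂ] H0).prodMap (↑V1⁻¹ : H1 →L[ℂ] H1) := by
    rw [show (↑V0 : H0 →L[ℂ] H0).prodMap (↑V1 : H1 →L[ℂ] H1)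
        = ↑(unitsProdMap V0 V1) from rfl, Ring.inverse_unit]
    rfl
  have hinv : Ring.inverse ((1 : (H0 × H1) →L[ℂ] (H0 × H1)) - c • T0.prodMap T1)
      = (Ring.inverse (1 - c • T0)).prodMap (Ring.inverse (1 - c • T1)) := by
    rw [hden, ← hV0, ← hV1, hV, Ring.inverse_unit, Ring.inverse_unit]
  simp only [mobiusOp]
  rw [hinv, hsub, prodMap_mul, prodMap_smul]

lemma spectrum_prodMap_subset (T0 : H0 →L[ℂ] H0) (T1 : H1 →L[ℂ] H1) :
    spectrum ℂ (T0.prodMap T1) ⊆ spectrum ℂ T0 ∪ spectrum ℂ T1 := by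
  intro z hz
  by_contra hmem
  rw [Set.mem_union] at hmem
  push_neg at hmem
  obtain ⟨h0, h1⟩ := hmem
  have hu0 := spectrum.notMem_iff.mp h0
  have hu1 := spectrum.notMem_iff.mp h1
  obtain ⟨V0, hV0⟩ := hu0
  obtain ⟨V1, hV1⟩ := hu1
  have heq : algebraMap ℂ ((H0 × H1) →L[ℂ] (H0 × H1)) z - T0.prodMap T1
      = (algebraMap ℂ (H0 →L[ℂ] H0) z - T0).prodMap (algebraMap ℂ (H1 →L[ℂ] H1) z - T1) := by
    rw [Algebra.algebraMap_eq_smul_one, Algebra.algebraMap_eq_smul_one,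
      Algebra.algebraMap_eq_smul_one, ← prodMap_smul_one, ← prodMap_sub]
  have : IsUnit (algebraMap ℂ ((H0 × H1) →L[ℂ] (H0 × H1)) z - T0.prodMap T1) := by
    rw [heq, ← hV0, ← hV1]
    exact (unitsProdMap V0 V1).isUnit
  exact spectrum.mem_iff.mp hz this

lemma weaklyHomogeneous_prodMap (T0 : H0 →L[ℂ] H0) (T1 : H1 →L[ℂ] H1)
    (h0 : WeaklyHomogeneousOp T0) (h1 : WeaklyHomogeneousOp T1) :
    WeaklyHomogeneousOp (T0.prodMap T1) := by
  obtain ⟨hs0, hm0⟩ := h0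
  obtain ⟨hs1, hm1⟩ := h1
  constructor
  · exact (spectrum_prodMap_subset T0 T1).trans (Set.union_subset hs0 hs1)
  · intro θ a ha
    have hca : ‖(starRingEnd ℂ) a‖ < 1 := by rwa [RCLike.norm_conj]
    obtain ⟨S0, hS0⟩ := hm0 θ a ha
    obtain ⟨S1, hS1⟩ := hm1 θ a ha
    refine ⟨unitsProdMap S0 S1, ?_⟩
    rw [mobiusOp_prodMap θ a T0 T1 (isUnit_one_sub_smul T0 hs0 hca)
      (isUnit_one_sub_smul T1 hs1 hca)]
    show (↑S0 : H0 →L[ℂ] H0).prodMap ↑S1 * (mobiusOp θ a T0).prodMap (mobiusOp θ a T1)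
      = T0.prodMap T1 * (↑S0 : H0 →L[ℂ] H0).prodMap ↑S1
    rw [prodMap_mul, prodMap_mul, hS0, hS1]

lemma mobiusOp_units_conj {E : Type*} [NormedAddCommGroup E] [NormedSpace ℂ E]
    (θ : ℝ) (a : ℂ) (u : (E →L[ℂ] E)ˣ) (A : E →L[ℂ] E) :
    mobiusOp θ a ((u : E →L[ℂ] E) * A * ((u⁻¹ : (E →L[ℂ] E)ˣ) : E →L[ℂ] E))
      = (u : E →L[ℂ] E) * mobiusOp θ a A * ((u⁻¹ : (E →L[ℂ] E)ˣ) : E →L[ℂ] E) := by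
  set c := (starRingEnd ℂ) a
  set v : E →L[ℂ] E := (u : E →L[ℂ] E)
  set w : E →L[ℂ] E := ((u⁻¹ : (E →L[ℂ] E)ˣ) : E →L[ℂ] E)
  have hvw : v * w = 1 := u.mul_inv
  have hwv : w * v = 1 := u.inv_mul
  have hsub : v * A * w - a • (1 : E →L[ℂ] E) = v * (A - a • 1) * w := by
    rw [mul_sub, sub_mul, mul_smul_comm, mul_one, smul_mul_assoc, hvw]
  have hden : (1 : E →L[ℂ] E) - c • (v * A * w) = v * (1 - c • A) * w := by
    rw [mul_sub, sub_mul, mul_one, hvw, mul_smul_comm, smul_mul_assoc]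
  have hinv : Ring.inverse ((1 : E →L[ℂ] E) - c • (v * A * w))
      = v * Ring.inverse (1 - c • A) * w := by
    rw [hden]
    exact ringInverse_conj u _
  simp only [mobiusOp]
  rw [hsub, hinv]
  rw [mul_smul_comm, smul_mul_assoc]
  congr 1
  calc (v * (A - a • 1) * w) * (v * Ring.inverse (1 - c • A) * w)
      = v * (A - a • 1) * (w * v) * Ring.inverse (1 - c • A) * w := by
        simp only [mul_assoc]
    _ = v * ((A - a • 1) * Ring.inverse (1 - c • A)) * w := by
        rw [hwv, mul_one]; simp only [mul_assoc]

lemma weaklyHomogeneous_units_conj {E : Type*} [NormedAddCommGroup E] [NormedSpace ℂ E]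
    (u : (E →L[ℂ] E)ˣ) (A : E →L[ℂ] E) (h : WeaklyHomogeneousOp A) :
    WeaklyHomogeneousOp ((u : E →L[ℂ] E) * A * ((u⁻¹ : (E →L[ℂ] E)ˣ) : E →L[ℂ] E)) := by
  obtain ⟨hs, hm⟩ := h
  set v : E →L[ℂ] E := (u : E →L[ℂ] E) with hv
  set w : E →L[ℂ] E := ((u⁻¹ : (E →L[ℂ] E)ˣ) : E →L[ℂ] E) with hw
  have hvw : v * w = 1 := u.mul_inv
  have hwv : w * v = 1 := u.inv_mul
  constructor
  · rw [show v * A * w = ↑u * A * ↑u⁻¹ from rfl, spectrum.units_conjugate]; exact hs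
  · intro θ a ha
    obtain ⟨S, hS⟩ := hm θ a ha
    refine ⟨u * S * u⁻¹, ?_⟩
    have hcoe : ((u * S * u⁻¹ : (E →L[ℂ] E)ˣ) : E →L[ℂ] E) = v * ↑S * w := rfl
    rw [hcoe, mobiusOp_units_conj]
    calc v * ↑S * w * (v * mobiusOp θ a A * w)
        = v * ↑S * (w * v) * mobiusOp θ a A * w := by simp only [mul_assoc]
      _ = v * (↑S * mobiusOp θ a A) * w := by rw [hwv, mul_one]; simp only [mul_assoc]
      _ = v * (A * ↑S) * w := by rw [hS]
      _ = v * A * (w * v) * ↑S * w := by rw [hwv, mul_one]; simp only [mul_assoc]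
      _ = v * A * w * (v * ↑S * w) := by simp only [mul_assoc]

end WHaux

/-- Lemma 4.1: if `T₀` and `T₁` are weakly homogeneous, then so is the block operator
`T = [[T₀, XT₁ − T₀X], [0, T₁]]` on `H₀ ⊕ H₁`. -/
theorem weaklyHomogeneous_blockT
    {H0 H1 : Type*} [NormedAddCommGroup H0] [InnerProductSpace ℂ H0] [CompleteSpace H0]
    [NormedAddCommGroup H1] [InnerProductSpace ℂ H1] [CompleteSpace H1]
    (T0 : H0 →L[ℂ] H0) (T1 : H1 →L[ℂ] H1) (X : H1 →L[ℂ] H0)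
    (h0 : WeaklyHomogeneousOp T0) (h1 : WeaklyHomogeneousOp T1) :
    WeaklyHomogeneousOp (blockT2 T0 T1 X) := by
  set e := WithLp.prodContinuousLinearEquiv 2 ℂ H0 H1
  set M : (H0 × H1) →L[ℂ] (H0 × H1) :=
    ((T0.comp (ContinuousLinearMap.fst ℂ H0 H1)) +
        ((X.comp T1 - T0.comp X).comp (ContinuousLinearMap.snd ℂ H0 H1))).prod
      (T1.comp (ContinuousLinearMap.snd ℂ H0 H1)) with hMdef
  have hb : blockT2 T0 T1 X = (WHaux.conjAlgEquiv e.symm) M := rfl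
  set N : (H0 × H1) →L[ℂ] (H0 × H1) :=
    (X.comp (ContinuousLinearMap.snd ℂ H0 H1)).prod 0 with hNdef
  have hNN : N * N = 0 := by
    ext x <;>
      simp [hNdef, ContinuousLinearMap.mul_apply]
  have hval : (1 + N) * (1 - N) = 1 := by
    calc (1 + N) * (1 - N) = 1 - N + (N - N * N) := by
          rw [add_mul, one_mul, mul_sub, mul_one]
      _ = 1 := by rw [hNN, sub_zero]; abel
  have hinv : (1 - N) * (1 + N) = 1 := by
    calc (1 - N) * (1 + N) = 1 + N - (N + N * N) := by
          rw [sub_mul, one_mul, mul_add, mul_one]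
      _ = 1 := by rw [hNN, add_zero]; abel
  set u : ((H0 × H1) →L[ℂ] (H0 × H1))ˣ := ⟨1 + N, 1 - N, hval, hinv⟩ with hu
  have hucoe : (u : (H0 × H1) →L[ℂ] (H0 × H1)) = 1 + N := rfl
  have huinv : ((u⁻¹ : ((H0 × H1) →L[ℂ] (H0 × H1))ˣ) : (H0 × H1) →L[ℂ] (H0 × H1)) = 1 - N := rfl
  have hM : M = (u : (H0 × H1) →L[ℂ] (H0 × H1)) * (T0.prodMap T1)
      * ((u⁻¹ : ((H0 × H1) →L[ℂ] (H0 × H1))ˣ) : (H0 × H1) →L[ℂ] (H0 × H1)) := by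
    rw [hucoe, huinv]
    ext x <;>
      simp [hMdef, hNdef, ContinuousLinearMap.mul_apply, ContinuousLinearMap.coe_prodMap',
        map_sub, sub_eq_add_neg] <;> abel
  rw [hb, hM]
  exact WHaux.weaklyHomogeneous_map _ _
    (WHaux.weaklyHomogeneous_units_conj u _
      (WHaux.weaklyHomogeneous_prodMap T0 T1 h0 h1))
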